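/- Let y₁ < ... < yₙ be distinct reals, n > 4, and for 1 ≤ i ≤ n−1 let L(i) = Σ_{j=1}^{i}(yⱼ − μ₁(i))² + Σ_{j=i+1}^{n}(yⱼ − μ₂(i))², where μ₁(i) and μ₂(i) are the means of the first i and last n−i values. Then min over all 2-partitions (P₁, P₂) of {y₁,...,yₙ} into two nonempty parts of SS(P₁) + SS(P₂) equals min_{1 ≤ i ≤ n−1} L(i); i.e., the unconstrained optimal 2-partition is always contiguous in the sorted order of y. -/

import Mathlib

open Finset

noncomputable def mu {n : ℕ} (y : Fin n → ℝ) (P : Finset (Fin n)) : ℝ :=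
  (∑ j ∈ P, y j) / P.card

noncomputable def SS {n : ℕ} (y : Fin n → ℝ) (P : Finset (Fin n)) : ℝ :=
  ∑ j ∈ P, (y j - mu y P) ^ 2

lemma SS_eq {n : ℕ} (y : Fin n → ℝ) (P : Finset (Fin n)) (hP : P.Nonempty) :
    SS y P = (∑ j ∈ P, (y j) ^ 2) - (∑ j ∈ P, y j) ^ 2 / P.card := by
  have hc : (P.card : ℝ) ≠ 0 := by
    exact_mod_cast Finset.card_ne_zero_of_mem hP.choose_spec
  unfold SS mu
  have : ∀ j ∈ P, (y j - (∑ j ∈ P, y j) / P.card) ^ 2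
      = y j ^ 2 - 2 * ((∑ j ∈ P, y j) / P.card) * y j + ((∑ j ∈ P, y j) / P.card)^2 := by
    intro j _; ring
  rw [Finset.sum_congr rfl this]
  rw [Finset.sum_add_distrib, Finset.sum_sub_distrib, ← Finset.mul_sum, Finset.sum_const,
    nsmul_eq_mul]
  field_simp
  ring

lemma le_emb {k n : ℕ} (f : Fin k → Fin n) (hf : StrictMono f) (i : Fin k) :
    (i : ℕ) ≤ (f i : ℕ) := by
  induction' hm : (i : ℕ) with m ih generalizing i
  · exact Nat.zero_le _
  · have hmk : m < k := by omega
    have h1 := ih ⟨m, hmk⟩ rfl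
    have h2 : f ⟨m, hmk⟩ < f i := hf (by simp [Fin.lt_def, hm])
    rw [Fin.lt_def] at h2
    omega

lemma filter_lt_eq_image {n k : ℕ} (hk : k ≤ n) :
    univ.filter (fun j : Fin n => (j : ℕ) < k) = Finset.image (Fin.castLE hk) univ := by
  ext x
  simp only [mem_filter, mem_univ, true_and, mem_image]
  constructor
  · intro hx; exact ⟨⟨x, hx⟩, by simp [Fin.ext_iff]⟩
  · rintro ⟨i, rfl⟩; exact i.2

lemma card_filter_lt {n k : ℕ} (hk : k ≤ n) :
    (univ.filter (fun j : Fin n => (j : ℕ) < k)).card = k := by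
  rw [filter_lt_eq_image hk, Finset.card_image_of_injective _ (Fin.castLE_injective hk)]
  simp

lemma sum_filter_lt_le {n : ℕ} (y : Fin n → ℝ) (hy : Monotone y) (P : Finset (Fin n)) :
    ∑ j ∈ univ.filter (fun j : Fin n => (j : ℕ) < P.card), y j ≤ ∑ j ∈ P, y j := by
  have hk : P.card ≤ n := by simpa using P.card_le_univ
  set e := P.orderEmbOfFin rfl with he
  have hPimg : P = Finset.image (fun i => e i) univ := by
    ext x
    simp only [mem_image, mem_univ, true_and]
    constructor
    · intro hx
      have : x ∈ Set.range e := by rw [Finset.range_orderEmbOfFin]; exact hx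
      obtain ⟨i, hi⟩ := this; exact ⟨i, hi⟩
    · rintro ⟨i, rfl⟩; exact Finset.orderEmbOfFin_mem _ _ _
  rw [filter_lt_eq_image hk, Finset.sum_image (fun a _ b _ h => Fin.castLE_injective hk h)]
  conv_rhs => rw [hPimg]
  rw [Finset.sum_image (fun a _ b _ h => e.injective h)]
  apply Finset.sum_le_sum
  intro i _
  exact hy (by rw [Fin.le_def]; simpa using le_emb e e.strictMono i)

lemma quad_max (c1 c2 T a b x : ℝ) (hc1 : 0 < c1) (hc2 : 0 < c2) (hax : a ≤ x) (hxb : x ≤ b) :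
    x^2/c1 + (T-x)^2/c2 ≤ max (a^2/c1 + (T-a)^2/c2) (b^2/c1 + (T-b)^2/c2) := by
  have hD : (0:ℝ) < c1 * c2 := mul_pos hc1 hc2
  have key : c2*x^2 + c1*(T-x)^2 ≤ max (c2*a^2 + c1*(T-a)^2) (c2*b^2 + c1*(T-b)^2) := by
    set qa := c2*a^2 + c1*(T-a)^2 with hqa
    set qb := c2*b^2 + c1*(T-b)^2 with hqb
    set M := max qa qb with hM
    have hqaM : qa ≤ M := le_max_left _ _
    have hqbM : qb ≤ M := le_max_right _ _
    have hid : (b-a)*(c2*x^2 + c1*(T-x)^2) ≤ (b-x)*qa + (x-a)*qb := by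
      have h1 : (0:ℝ) ≤ (b-x)*(x-a)*(c1+c2) :=
        mul_nonneg (mul_nonneg (by linarith) (by linarith)) (by linarith)
      nlinarith [h1]
    rcases eq_or_lt_of_le (hax.trans hxb) with h | h
    · have hxa : x = a := le_antisymm (h ▸ hxb) hax
      rw [hxa]; exact hqaM
    · have h2 : (b-a)*(c2*x^2 + c1*(T-x)^2) ≤ (b-a)*M := by
        calc (b-a)*(c2*x^2 + c1*(T-x)^2) ≤ (b-x)*qa + (x-a)*qb := hid
          _ ≤ (b-x)*M + (x-a)*M := by
              gcongr <;> linarith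
          _ = (b-a)*M := by ring
      exact le_of_mul_le_mul_left (by linarith [h2]) (by linarith : (0:ℝ) < b - a)
  have e1 : ∀ z : ℝ, z^2/c1 + (T-z)^2/c2 = (c2*z^2 + c1*(T-z)^2)/(c1*c2) := by
    intro z; field_simp
  rw [e1, e1, e1, max_div_div_right hD.le]
  exact div_le_div_of_nonneg_right key hD.le

lemma split_eq {n : ℕ} (y : Fin n → ℝ) (P₁ P₂ : Finset (Fin n)) (h1 : P₁.Nonempty)
    (h2 : P₂.Nonempty) (hd : Disjoint P₁ P₂) (hu : P₁ ∪ P₂ = univ) :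
    SS y P₁ + SS y P₂ = (∑ j, (y j)^2)
      - ((∑ j ∈ P₁, y j)^2/(P₁.card : ℝ)
        + ((∑ j, y j) - ∑ j ∈ P₁, y j)^2/(P₂.card : ℝ)) := by
  have hsq : (∑ j ∈ P₁, (y j)^2) + (∑ j ∈ P₂, (y j)^2) = ∑ j, (y j)^2 := by
    rw [← Finset.sum_union hd, hu]
  have hs : (∑ j ∈ P₁, y j) + (∑ j ∈ P₂, y j) = ∑ j, y j := by
    rw [← Finset.sum_union hd, hu]
  rw [SS_eq y P₁ h1, SS_eq y P₂ h2]
  have : (∑ j ∈ P₂, y j) = (∑ j, y j) - ∑ j ∈ P₁, y j := by linarith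
  rw [this]
  linarith

lemma compl_filter {n i : ℕ} :
    (univ.filter (fun j : Fin n => i ≤ (j : ℕ))) =
      (univ.filter (fun j : Fin n => (j : ℕ) < i))ᶜ := by
  ext x; simp [not_lt]

lemma card_filter_ge {n i : ℕ} :
    (univ.filter (fun j : Fin n => i ≤ (j : ℕ))).card = n - i := by
  rcases le_or_gt i n with hi | hi
  · rw [compl_filter, Finset.card_compl, card_filter_lt hi, Fintype.card_fin]
  · have h1 : (univ.filter (fun j : Fin n => i ≤ (j : ℕ))) = ∅ := by
      ext x; simp only [mem_filter, mem_univ, true_and, Finset.notMem_empty, iff_false]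
      omega
    rw [h1]; simp; omega

lemma sum_filter_ge {n : ℕ} (i : ℕ) (y : Fin n → ℝ) :
    ∑ j ∈ univ.filter (fun j : Fin n => i ≤ (j : ℕ)), y j
      = (∑ j, y j) - ∑ j ∈ univ.filter (fun j : Fin n => (j : ℕ) < i), y j := by
  rw [compl_filter]
  have := Finset.sum_add_sum_compl (univ.filter (fun j : Fin n => (j : ℕ) < i)) y
  linarith

lemma L_eq {n : ℕ} (y : Fin n → ℝ) (i : ℕ) (h1 : 1 ≤ i) (h2 : i ≤ n - 1) (hn : 1 ≤ n) :
    SS y (univ.filter (fun j : Fin n => (j : ℕ) < i))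
      + SS y (univ.filter (fun j : Fin n => i ≤ (j : ℕ)))
    = (∑ j, (y j)^2)
      - ((∑ j ∈ univ.filter (fun j : Fin n => (j : ℕ) < i), y j)^2/(i : ℝ)
        + ((∑ j, y j) - ∑ j ∈ univ.filter (fun j : Fin n => (j : ℕ) < i), y j)^2
            /((n : ℝ) - i)) := by
  have hin : i < n := by omega
  have hF : (univ.filter (fun j : Fin n => (j : ℕ) < i)).Nonempty :=
    ⟨⟨0, by omega⟩, by simp; omega⟩
  have hG : (univ.filter (fun j : Fin n => i ≤ (j : ℕ))).Nonempty :=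
    ⟨⟨i, hin⟩, by simp⟩
  have hd : Disjoint (univ.filter (fun j : Fin n => (j : ℕ) < i))
      (univ.filter (fun j : Fin n => i ≤ (j : ℕ))) := by
    rw [compl_filter]; exact disjoint_compl_right
  have hu : (univ.filter (fun j : Fin n => (j : ℕ) < i))
      ∪ (univ.filter (fun j : Fin n => i ≤ (j : ℕ))) = univ := by
    rw [compl_filter]; exact Finset.union_compl _
  rw [split_eq y _ _ hF hG hd hu, card_filter_lt hin.le, card_filter_ge]
  have : ((n - i : ℕ) : ℝ) = (n : ℝ) - i := by
    have := Nat.cast_sub hin.le (R := ℝ); exact this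
  rw [this]

lemma key_bound {n : ℕ} (hn : 4 < n) (y : Fin n → ℝ) (hy : StrictMono y)
    (P₁ P₂ : Finset (Fin n)) (h1 : P₁.Nonempty) (h2 : P₂.Nonempty)
    (hd : Disjoint P₁ P₂) (hu : P₁ ∪ P₂ = univ) :
    ∃ i : ℕ, 1 ≤ i ∧ i ≤ n - 1 ∧
      SS y (univ.filter (fun j : Fin n => (j : ℕ) < i))
        + SS y (univ.filter (fun j : Fin n => i ≤ (j : ℕ)))
      ≤ SS y P₁ + SS y P₂ := by
  set k₁ := P₁.card with hk₁
  set k₂ := P₂.card with hk₂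
  have hsum : k₁ + k₂ = n := by
    rw [hk₁, hk₂, ← Finset.card_union_of_disjoint hd, hu, Finset.card_univ, Fintype.card_fin]
  have hk1pos : 1 ≤ k₁ := Finset.card_pos.2 h1
  have hk2pos : 1 ≤ k₂ := Finset.card_pos.2 h2
  set T := ∑ j, y j with hT
  set Q := ∑ j, (y j)^2 with hQ
  set S := ∑ j ∈ P₁, y j with hS
  set a := ∑ j ∈ univ.filter (fun j : Fin n => (j : ℕ) < k₁), y j with ha
  set a₂ := ∑ j ∈ univ.filter (fun j : Fin n => (j : ℕ) < k₂), y j with ha2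
  set b := T - a₂ with hb
  have haS : a ≤ S := sum_filter_lt_le y hy.monotone P₁
  have hSb : S ≤ b := by
    have h := sum_filter_lt_le y hy.monotone P₂
    have hs2 : (∑ j ∈ P₂, y j) = T - S := by
      have h3 := Finset.sum_union hd (f := y)
      rw [hu] at h3
      rw [hT, hS]; linarith
    rw [hs2] at h
    simp only [hb, ha2, hk₂]
    linarith
  have hc1 : (0:ℝ) < (k₁ : ℝ) := by exact_mod_cast hk1pos
  have hc2 : (0:ℝ) < (k₂ : ℝ) := by exact_mod_cast hk2pos
  have hmax := quad_max (k₁ : ℝ) (k₂ : ℝ) T a b S hc1 hc2 haS hSb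
  have hP : SS y P₁ + SS y P₂ = Q - (S^2/(k₁:ℝ) + (T - S)^2/(k₂:ℝ)) :=
    split_eq y P₁ P₂ h1 h2 hd hu
  have hcast1 : (n : ℝ) - (k₁ : ℝ) = (k₂ : ℝ) := by
    have : (n : ℝ) = (k₁ : ℝ) + (k₂ : ℝ) := by exact_mod_cast hsum.symm
    linarith
  have hcast2 : (n : ℝ) - (k₂ : ℝ) = (k₁ : ℝ) := by
    have : (n : ℝ) = (k₁ : ℝ) + (k₂ : ℝ) := by exact_mod_cast hsum.symm
    linarith
  have hL1 : SS y (univ.filter (fun j : Fin n => (j : ℕ) < k₁))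
      + SS y (univ.filter (fun j : Fin n => k₁ ≤ (j : ℕ)))
      = Q - (a^2/(k₁:ℝ) + (T - a)^2/(k₂:ℝ)) := by
    rw [L_eq y k₁ hk1pos (by omega) (by omega), hcast1]
  have hL2 : SS y (univ.filter (fun j : Fin n => (j : ℕ) < k₂))
      + SS y (univ.filter (fun j : Fin n => k₂ ≤ (j : ℕ)))
      = Q - (a₂^2/(k₂:ℝ) + (T - a₂)^2/(k₁:ℝ)) := by
    rw [L_eq y k₂ hk2pos (by omega) (by omega), hcast2]
  rcases max_cases (a^2/(k₁:ℝ) + (T-a)^2/(k₂:ℝ)) (b^2/(k₁:ℝ) + (T-b)^2/(k₂:ℝ)) with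
    ⟨hm, _⟩ | ⟨hm, _⟩
  · refine ⟨k₁, hk1pos, by omega, ?_⟩
    rw [hL1, hP]
    rw [hm] at hmax
    linarith
  · refine ⟨k₂, hk2pos, by omega, ?_⟩
    rw [hL2, hP]
    rw [hm] at hmax
    have hbb : b^2/(k₁:ℝ) + (T-b)^2/(k₂:ℝ) = (T - a₂)^2/(k₁:ℝ) + a₂^2/(k₂:ℝ) := by
      rw [hb]; ring_nf
    rw [hbb] at hmax
    linarith

theorem stmt_17 (n : ℕ) (hn : 4 < n) (y : Fin n → ℝ) (hy : StrictMono y) :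
    sInf {l : ℝ | ∃ P₁ P₂ : Finset (Fin n), P₁.Nonempty ∧ P₂.Nonempty ∧
        Disjoint P₁ P₂ ∧ P₁ ∪ P₂ = Finset.univ ∧ l = SS y P₁ + SS y P₂}
      = sInf {l : ℝ | ∃ i : ℕ, 1 ≤ i ∧ i ≤ n - 1 ∧
        l = SS y (univ.filter (fun j : Fin n => (j : ℕ) < i))
            + SS y (univ.filter (fun j : Fin n => i ≤ (j : ℕ)))} := by
  set g : ℕ → ℝ := fun i => SS y (univ.filter (fun j : Fin n => (j : ℕ) < i))
      + SS y (univ.filter (fun j : Fin n => i ≤ (j : ℕ))) with hg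
  set A := {l : ℝ | ∃ P₁ P₂ : Finset (Fin n), P₁.Nonempty ∧ P₂.Nonempty ∧
      Disjoint P₁ P₂ ∧ P₁ ∪ P₂ = Finset.univ ∧ l = SS y P₁ + SS y P₂} with hA
  set B := {l : ℝ | ∃ i : ℕ, 1 ≤ i ∧ i ≤ n - 1 ∧
      l = SS y (univ.filter (fun j : Fin n => (j : ℕ) < i))
          + SS y (univ.filter (fun j : Fin n => i ≤ (j : ℕ)))} with hB
  have hBA : B ⊆ A := by
    rintro l ⟨i, h1, h2, rfl⟩
    have hin : i < n := by omega
    refine ⟨univ.filter (fun j : Fin n => (j : ℕ) < i),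
      univ.filter (fun j : Fin n => i ≤ (j : ℕ)),
      ⟨⟨0, by omega⟩, by simp; omega⟩, ⟨⟨i, hin⟩, by simp⟩, ?_, ?_, rfl⟩
    · rw [compl_filter]; exact disjoint_compl_right
    · rw [compl_filter]; exact Finset.union_compl _
  have hBfin : B.Finite := by
    have hsub : B ⊆ g '' (Set.Icc 1 (n - 1)) := by
      rintro l ⟨i, h1, h2, rfl⟩
      exact ⟨i, ⟨h1, h2⟩, rfl⟩
    exact ((Set.finite_Icc 1 (n - 1)).image g).subset hsub
  have hBne : B.Nonempty := ⟨g 1, 1, le_refl 1, by omega, rfl⟩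
  have hBbdd : BddBelow B := hBfin.bddBelow
  have key : ∀ l ∈ A, ∃ m ∈ B, m ≤ l := by
    rintro l ⟨P₁, P₂, h1, h2, hd, hu, rfl⟩
    obtain ⟨i, hi1, hi2, hle⟩ := key_bound hn y hy P₁ P₂ h1 h2 hd hu
    exact ⟨g i, ⟨i, hi1, hi2, rfl⟩, hle⟩
  have hAne : A.Nonempty := hBne.mono hBA
  have hAbdd : BddBelow A := by
    refine ⟨sInf B, fun l hl => ?_⟩
    obtain ⟨m, hm, hml⟩ := key l hl
    exact (csInf_le hBbdd hm).trans hml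
  apply le_antisymm
  · exact csInf_le_csInf hAbdd hBne hBA
  · refine le_csInf hAne fun l hl => ?_
    obtain ⟨m, hm, hml⟩ := key l hl
    exact (csInf_le hBbdd hm).trans hml
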